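/- Let $X_1, X_2, \ldots$ be random variables with means $\mu_i$, variances $\sigma_i^2$, and covariances satisfying $\mathrm{Cov}(X_i, X_j) \le \rho_{j-i}\sigma_i\sigma_j$ for $i \le j$, where $0 \le \rho_m \le 1$ for all $m \ge 0$. If $\sum_{m=1}^\infty \rho_m < \infty$ and $\sum_{i=1}^\infty \sigma_i^2 (\log i)^2 / i^2 < \infty$, then $\frac{1}{n}\sum_{i=1}^n X_i - \frac{1}{n}\sum_{i=1}^n \mu_i \to 0$ almost surely as $n \to \infty$. -/

import Mathlib

open MeasureTheory Filter Finset

/-- blocks sum for the Rademacher–Menshov chaining argument. -/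
noncomputable def Gsum (c : ℕ → ℝ) (a k : ℕ) : ℝ :=
  ∑ j ∈ range (k+1), ∑ l ∈ range (2^(k-j)),
    (∑ i ∈ Ioc (a + l*2^j) (a + (l+1)*2^j), c i)^2

lemma Gsum_nonneg (c : ℕ → ℝ) (a k : ℕ) : 0 ≤ Gsum c a k :=
  Finset.sum_nonneg fun _ _ => Finset.sum_nonneg fun _ _ => sq_nonneg _

lemma Gsum_mono (c : ℕ → ℝ) (a k : ℕ) : Gsum c a k ≤ Gsum c a (k+1) := by
  unfold Gsum
  calc ∑ j ∈ range (k+1), ∑ l ∈ range (2^(k-j)), (∑ i ∈ Ioc (a + l*2^j) (a + (l+1)*2^j), c i)^2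
      ≤ ∑ j ∈ range (k+1), ∑ l ∈ range (2^(k+1-j)), (∑ i ∈ Ioc (a + l*2^j) (a + (l+1)*2^j), c i)^2 := by
        refine Finset.sum_le_sum fun j hj => ?_
        refine Finset.sum_le_sum_of_subset_of_nonneg ?_ (fun _ _ _ => sq_nonneg _)
        exact Finset.range_subset_range.2 (Nat.pow_le_pow_right (by norm_num) (by omega))
    _ ≤ ∑ j ∈ range (k+2), ∑ l ∈ range (2^(k+1-j)), (∑ i ∈ Ioc (a + l*2^j) (a + (l+1)*2^j), c i)^2 := by
        refine Finset.sum_le_sum_of_subset_of_nonneg (Finset.range_subset_range.2 (by omega))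
          (fun _ _ _ => Finset.sum_nonneg fun _ _ => sq_nonneg _)

lemma Gsum_split (c : ℕ → ℝ) (a k : ℕ) :
    (∑ i ∈ Ioc a (a + 2^k), c i)^2 + Gsum c (a + 2^k) k ≤ Gsum c a (k+1) := by
  unfold Gsum
  have key : ∀ j ∈ range (k+1),
      (if j = k then (∑ i ∈ Ioc a (a + 2^k), c i)^2 else 0)
        + ∑ l ∈ range (2^(k-j)), (∑ i ∈ Ioc (a + 2^k + l*2^j) (a + 2^k + (l+1)*2^j), c i)^2
      ≤ ∑ l ∈ range (2^(k+1-j)), (∑ i ∈ Ioc (a + l*2^j) (a + (l+1)*2^j), c i)^2 := by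
    intro j hj
    have hjk : j ≤ k := Nat.lt_succ_iff.1 (Finset.mem_range.1 hj)
    have hpow : 2^(k+1-j) = 2^(k-j) + 2^(k-j) := by
      have h1 : k+1-j = (k-j)+1 := by omega
      rw [h1, pow_succ]; ring
    rw [hpow, Finset.sum_range_add]
    have hsecond : ∀ l, a + (2^(k-j) + l)*2^j = a + 2^k + l*2^j := by
      intro l
      have h2 : 2^(k-j) * 2^j = 2^k := by
        rw [← pow_add]; congr 1; omega
      rw [add_mul, h2]; ring
    have e2 : ∑ l ∈ range (2^(k-j)), (∑ i ∈ Ioc (a + (2^(k-j)+l)*2^j) (a + (2^(k-j)+l+1)*2^j), c i)^2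
        = ∑ l ∈ range (2^(k-j)), (∑ i ∈ Ioc (a + 2^k + l*2^j) (a + 2^k + (l+1)*2^j), c i)^2 := by
      refine Finset.sum_congr rfl fun l _ => ?_
      rw [add_assoc (2^(k-j)) l 1, hsecond l, hsecond (l+1)]
    rw [e2]
    refine add_le_add ?_ le_rfl
    by_cases hjeq : j = k
    · subst hjeq
      simp only [if_pos rfl, Nat.sub_self, pow_zero, Finset.sum_range_one]
      simp
    · simp only [if_neg hjeq]
      exact Finset.sum_nonneg fun _ _ => sq_nonneg _
  calc (∑ i ∈ Ioc a (a + 2^k), c i)^2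
        + ∑ j ∈ range (k+1), ∑ l ∈ range (2^(k-j)), (∑ i ∈ Ioc (a+2^k + l*2^j) (a+2^k + (l+1)*2^j), c i)^2
      = ∑ j ∈ range (k+1), ((if j = k then (∑ i ∈ Ioc a (a + 2^k), c i)^2 else 0)
          + ∑ l ∈ range (2^(k-j)), (∑ i ∈ Ioc (a+2^k + l*2^j) (a+2^k + (l+1)*2^j), c i)^2) := by
        rw [Finset.sum_add_distrib, Finset.sum_ite_eq' (range (k+1)) k]
        simp
    _ ≤ ∑ j ∈ range (k+1), ∑ l ∈ range (2^(k+1-j)), (∑ i ∈ Ioc (a + l*2^j) (a + (l+1)*2^j), c i)^2 :=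
        Finset.sum_le_sum key
    _ ≤ ∑ j ∈ range (k+2), ∑ l ∈ range (2^(k+1-j)), (∑ i ∈ Ioc (a + l*2^j) (a + (l+1)*2^j), c i)^2 :=
        Finset.sum_le_sum_of_subset_of_nonneg (Finset.range_subset_range.2 (by omega))
          (fun _ _ _ => Finset.sum_nonneg fun _ _ => sq_nonneg _)

lemma dyadic_sq_bound (c : ℕ → ℝ) :
    ∀ (k a m : ℕ), m ≤ 2^k → (∑ i ∈ Ioc a (a+m), c i)^2 ≤ ((k:ℝ)+1) * Gsum c a k := by
  intro k
  induction k with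
  | zero =>
    intro a m hm
    interval_cases m
    · simpa using Gsum_nonneg c a 0
    · unfold Gsum
      simp
  | succ k ih =>
    intro a m hm
    push_cast
    by_cases hm2 : m ≤ 2^k
    · calc (∑ i ∈ Ioc a (a+m), c i)^2 ≤ ((k:ℝ)+1) * Gsum c a k := ih a m hm2
        _ ≤ ((k:ℝ)+1+1) * Gsum c a (k+1) := by
            have h1 := Gsum_mono c a k
            have h2 := Gsum_nonneg c a k
            nlinarith
    · push_neg at hm2
      set m' := m - 2^k with hm'
      have hm'le : m' ≤ 2^k := by
        have h2 : (2:ℕ)^(k+1) = 2^k + 2^k := by rw [pow_succ]; ring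
        omega
      have hsplit : (∑ i ∈ Ioc a (a+m), c i)
          = (∑ i ∈ Ioc a (a+2^k), c i) + ∑ i ∈ Ioc (a+2^k) (a+2^k+m'), c i := by
        rw [Finset.sum_Ioc_consecutive c (Nat.le_add_right a (2^k)) (Nat.le_add_right _ m')]
        congr 1
        rw [add_assoc, Nat.add_sub_cancel' hm2.le]
      have hy := ih (a+2^k) m' hm'le
      set x := ∑ i ∈ Ioc a (a+2^k), c i
      set y := ∑ i ∈ Ioc (a+2^k) (a+2^k+m'), c i
      set g := Gsum c (a+2^k) k with hg
      have hg0 : 0 ≤ g := Gsum_nonneg c (a+2^k) k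
      have hkey : (x+y)^2 ≤ ((k:ℝ)+2) * (x^2 + g) := by
        have hk0 : (0:ℝ) ≤ (k:ℝ) := Nat.cast_nonneg k
        nlinarith [sq_nonneg (((k:ℝ)+1)*x - y), hy, hg0, sq_nonneg x, sq_nonneg y]
      calc (∑ i ∈ Ioc a (a+m), c i)^2 = (x+y)^2 := by rw [hsplit]
        _ ≤ ((k:ℝ)+2) * (x^2 + g) := hkey
        _ ≤ ((k:ℝ)+2) * Gsum c a (k+1) := by
            have h3 := Gsum_split c a k
            nlinarith [Gsum_nonneg c a (k+1)]
        _ = ((k:ℝ)+1+1) * Gsum c a (k+1) := by ring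

lemma l2_mul_integrable {Ω : Type*} [MeasurableSpace Ω] {P : Measure Ω} {f g : Ω → ℝ}
    (hf : MemLp f 2 P) (hg : MemLp g 2 P) : Integrable (fun ω => f ω * g ω) P := by
  have h1 := hf.integrable_sq
  have h2 := hg.integrable_sq
  refine (((h1.add h2).div_const 2)).mono' (hf.aestronglyMeasurable.mul hg.aestronglyMeasurable) ?_
  filter_upwards with ω
  simp only [Pi.add_apply]
  rw [Real.norm_eq_abs, abs_mul]
  nlinarith [sq_nonneg (|f ω| - |g ω|), sq_abs (f ω), sq_abs (g ω), abs_nonneg (f ω), abs_nonneg (g ω)]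

lemma cov_block_bound {Ω : Type*} [MeasurableSpace Ω] (P : Measure Ω) [IsProbabilityMeasure P]
    (X : ℕ → Ω → ℝ) (μ σ ρ : ℕ → ℝ)
    (hL2 : ∀ i, MeasureTheory.MemLp (X i) 2 P)
    (hvar : ∀ i, 1 ≤ i → ∫ ω, (X i ω - μ i) ^ 2 ∂P = (σ i) ^ 2)
    (hσ : ∀ i, 0 ≤ σ i)
    (hρ : ∀ m, 0 ≤ ρ m ∧ ρ m ≤ 1)
    (hcov : ∀ i j, 1 ≤ i → i ≤ j →
      ∫ ω, (X i ω - μ i) * (X j ω - μ j) ∂P ≤ ρ (j - i) * (σ i * σ j))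
    (hρsum : Summable fun m => ρ (m + 1)) (a b : ℕ) :
    ∫ ω, (∑ i ∈ Ioc a b, (X i ω - μ i)) ^ 2 ∂P
      ≤ (1 + 2 * ∑' m, ρ (m+1)) * ∑ i ∈ Ioc a b, (σ i)^2 := by
  set R := ∑' m, ρ (m+1) with hR
  have hR0 : 0 ≤ R := tsum_nonneg fun m => (hρ (m+1)).1
  set Y : ℕ → Ω → ℝ := fun i ω => X i ω - μ i with hY
  have hYL2 : ∀ i, MemLp (Y i) 2 P := fun i => (hL2 i).sub (memLp_const (μ i))
  have hInt : ∀ i j, Integrable (fun ω => Y i ω * Y j ω) P :=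
    fun i j => l2_mul_integrable (hYL2 i) (hYL2 j)
  set s := Ioc a b with hs
  set A : ℕ → ℕ → ℝ := fun i j =>
    if i = j then (σ i)^2/2 else ρ ((i-j)+(j-i)) * (σ i)^2/2 with hA
  have hA0 : ∀ i j, 0 ≤ A i j := by
    intro i j
    simp only [hA]
    split
    · positivity
    · have := (hρ ((i-j)+(j-i))).1
      have := hσ i
      positivity
  -- expansion
  have hexp : ∫ ω, (∑ i ∈ s, Y i ω) ^ 2 ∂P = ∑ i ∈ s, ∑ j ∈ s, ∫ ω, Y i ω * Y j ω ∂P := by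
    have e1 : ∀ ω, (∑ i ∈ s, Y i ω)^2 = ∑ i ∈ s, ∑ j ∈ s, Y i ω * Y j ω := by
      intro ω; rw [sq, Finset.sum_mul_sum]
    simp_rw [e1]
    rw [integral_finset_sum s (fun i _ => integrable_finset_sum s (fun j _ => hInt i j))]
    exact Finset.sum_congr rfl fun i _ =>
      integral_finset_sum s (fun j _ => hInt i j)
  -- termwise bound
  have hterm : ∀ i ∈ s, ∀ j ∈ s, ∫ ω, Y i ω * Y j ω ∂P ≤ A i j + A j i := by
    intro i hi j hj
    have hi1 : 1 ≤ i := by have := (Finset.mem_Ioc.1 hi).1; omega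
    have hj1 : 1 ≤ j := by have := (Finset.mem_Ioc.1 hj).1; omega
    rcases lt_trichotomy i j with h | h | h
    · have hc := hcov i j hi1 h.le
      have hd : (i-j)+(j-i) = j - i := by omega
      have hd2 : (j-i)+(i-j) = j - i := by omega
      have hAM : ρ (j-i) * (σ i * σ j) ≤ ρ (j-i) * ((σ i)^2 + (σ j)^2)/2 := by
        nlinarith [sq_nonneg (σ i - σ j), (hρ (j-i)).1, hσ i, hσ j, mul_nonneg (hσ i) (hσ j)]
      simp only [hA, if_neg h.ne, if_neg h.ne', hd, hd2]
      calc ∫ ω, Y i ω * Y j ω ∂P ≤ ρ (j-i) * (σ i * σ j) := hc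
        _ ≤ ρ (j-i) * ((σ i)^2 + (σ j)^2)/2 := hAM
        _ = ρ (j-i) * (σ i)^2/2 + ρ (j-i) * (σ j)^2/2 := by ring
    · subst h
      have := hvar i hi1
      simp only [hA, if_pos rfl]
      have he : ∫ ω, Y i ω * Y i ω ∂P = ∫ ω, (Y i ω)^2 ∂P := by
        refine integral_congr_ae (Filter.Eventually.of_forall fun ω => ?_); ring
      rw [he, this]; ring_nf; linarith [sq_nonneg (σ i)]
    · have hc := hcov j i hj1 h.le
      have hd : (i-j)+(j-i) = i - j := by omega
      have hd2 : (j-i)+(i-j) = i - j := by omega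
      have hAM : ρ (i-j) * (σ j * σ i) ≤ ρ (i-j) * ((σ i)^2 + (σ j)^2)/2 := by
        nlinarith [sq_nonneg (σ i - σ j), (hρ (i-j)).1, hσ i, hσ j, mul_nonneg (hσ i) (hσ j)]
      simp only [hA, if_neg h.ne', if_neg h.ne, hd, hd2]
      calc ∫ ω, Y i ω * Y j ω ∂P = ∫ ω, Y j ω * Y i ω ∂P := by
            refine integral_congr_ae (Filter.Eventually.of_forall fun ω => ?_); ring
        _ ≤ ρ (i-j) * (σ j * σ i) := hc
        _ ≤ ρ (i-j) * ((σ i)^2 + (σ j)^2)/2 := hAM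
        _ = ρ (i-j) * (σ i)^2/2 + ρ (i-j) * (σ j)^2/2 := by ring
  -- row bound for A
  have hrow : ∀ i, ∑ j ∈ s, A i j ≤ (σ i)^2/2 + R * (σ i)^2 := by
    intro i
    rw [← Finset.sum_filter_add_sum_filter_not s (fun j => i = j)]
    have h1 : ∑ j ∈ s.filter (fun j => i = j), A i j ≤ (σ i)^2/2 := by
      have hsub : s.filter (fun j => i = j) ⊆ {i} := by
        intro j hj
        simp only [Finset.mem_filter] at hj
        simp [hj.2.symm]
      calc ∑ j ∈ s.filter (fun j => i = j), A i j ≤ ∑ j ∈ {i}, A i j :=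
            Finset.sum_le_sum_of_subset_of_nonneg hsub (fun j _ _ => hA0 i j)
        _ = A i i := Finset.sum_singleton _ _
        _ = (σ i)^2/2 := by simp [hA]
    have h2 : ∑ j ∈ s.filter (fun j => ¬ i = j), A i j ≤ R * (σ i)^2 := by
      have he : ∀ j ∈ s.filter (fun j => ¬ i = j), A i j = ρ ((i-j)+(j-i)) * (σ i)^2/2 := by
        intro j hj
        simp only [Finset.mem_filter] at hj
        simp [hA, hj.2]
      rw [Finset.sum_congr rfl he]
      -- split into j < i and i < j
      rw [← Finset.sum_filter_add_sum_filter_not _ (fun j => j < i)]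
      have hb1 : ∑ j ∈ (s.filter (fun j => ¬ i = j)).filter (fun j => j < i),
          ρ ((i-j)+(j-i)) * (σ i)^2/2 ≤ R * ((σ i)^2/2) := by
        have hsub : (s.filter (fun j => ¬ i = j)).filter (fun j => j < i) ⊆ Finset.range i := by
          intro j hj
          simp only [Finset.mem_filter, Finset.mem_range] at hj ⊢
          exact hj.2
        calc ∑ j ∈ (s.filter (fun j => ¬ i = j)).filter (fun j => j < i),
              ρ ((i-j)+(j-i)) * (σ i)^2/2
            ≤ ∑ j ∈ Finset.range i, ρ ((i-j)+(j-i)) * (σ i)^2/2 := by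
              refine Finset.sum_le_sum_of_subset_of_nonneg hsub fun j _ _ => ?_
              have := (hρ ((i-j)+(j-i))).1
              have := hσ i
              positivity
          _ = (∑ j ∈ Finset.range i, ρ ((i-j)+(j-i))) * ((σ i)^2/2) := by
              rw [Finset.sum_mul]; exact Finset.sum_congr rfl fun j _ => by ring
          _ ≤ R * ((σ i)^2/2) := by
              refine mul_le_mul_of_nonneg_right ?_ (by positivity)
              have he2 : ∑ j ∈ Finset.range i, ρ ((i-j)+(j-i))
                  = ∑ j ∈ Finset.range i, ρ ((i-1-j)+1) := by
                refine Finset.sum_congr rfl fun j hj => ?_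
                have := Finset.mem_range.1 hj
                congr 1; omega
              rw [he2, Finset.sum_range_reflect (fun m => ρ (m+1)) i]
              exact Summable.sum_le_tsum _ (fun m _ => (hρ (m+1)).1) hρsum
      have hb2 : ∑ j ∈ (s.filter (fun j => ¬ i = j)).filter (fun j => ¬ j < i),
          ρ ((i-j)+(j-i)) * (σ i)^2/2 ≤ R * ((σ i)^2/2) := by
        have hsub : (s.filter (fun j => ¬ i = j)).filter (fun j => ¬ j < i) ⊆ Finset.Ico (i+1) (b+1) := by
          intro j hj
          simp only [Finset.mem_filter, hs, Finset.mem_Ioc, Finset.mem_Ico] at hj ⊢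
          omega
        calc ∑ j ∈ (s.filter (fun j => ¬ i = j)).filter (fun j => ¬ j < i),
              ρ ((i-j)+(j-i)) * (σ i)^2/2
            ≤ ∑ j ∈ Finset.Ico (i+1) (b+1), ρ ((i-j)+(j-i)) * (σ i)^2/2 := by
              refine Finset.sum_le_sum_of_subset_of_nonneg hsub fun j _ _ => ?_
              have := (hρ ((i-j)+(j-i))).1
              have := hσ i
              positivity
          _ = (∑ j ∈ Finset.Ico (i+1) (b+1), ρ ((i-j)+(j-i))) * ((σ i)^2/2) := by
              rw [Finset.sum_mul]; exact Finset.sum_congr rfl fun j _ => by ring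
          _ ≤ R * ((σ i)^2/2) := by
              refine mul_le_mul_of_nonneg_right ?_ (by positivity)
              rw [Finset.sum_Ico_eq_sum_range]
              have he2 : ∑ j ∈ Finset.range (b+1-(i+1)), ρ ((i-(i+1+j))+((i+1+j)-i))
                  = ∑ j ∈ Finset.range (b+1-(i+1)), ρ (j+1) := by
                refine Finset.sum_congr rfl fun j hj => ?_
                congr 1; omega
              rw [he2]
              exact Summable.sum_le_tsum _ (fun m _ => (hρ (m+1)).1) hρsum
      linarith
    linarith
  -- combine
  calc ∫ ω, (∑ i ∈ s, Y i ω) ^ 2 ∂P = ∑ i ∈ s, ∑ j ∈ s, ∫ ω, Y i ω * Y j ω ∂P := hexp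
    _ ≤ ∑ i ∈ s, ∑ j ∈ s, (A i j + A j i) :=
        Finset.sum_le_sum fun i hi => Finset.sum_le_sum fun j hj => hterm i hi j hj
    _ = (∑ i ∈ s, ∑ j ∈ s, A i j) + ∑ i ∈ s, ∑ j ∈ s, A j i := by
        rw [← Finset.sum_add_distrib]
        exact Finset.sum_congr rfl fun i _ => Finset.sum_add_distrib
    _ = 2 * ∑ i ∈ s, ∑ j ∈ s, A i j := by
        rw [Finset.sum_comm (f := fun i j => A j i)]
        ring
    _ ≤ 2 * ∑ i ∈ s, ((σ i)^2/2 + R * (σ i)^2) := by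
        have := Finset.sum_le_sum (fun i (_ : i ∈ s) => hrow i)
        linarith
    _ = (1 + 2 * R) * ∑ i ∈ s, (σ i)^2 := by
        rw [Finset.mul_sum, Finset.mul_sum]
        exact Finset.sum_congr rfl fun i _ => by ring

lemma sum_blocks (f : ℕ → ℝ) (a c : ℕ) :
    ∀ M, ∑ l ∈ range M, ∑ i ∈ Ioc (a+l*c) (a+(l+1)*c), f i = ∑ i ∈ Ioc a (a+M*c), f i := by
  intro M
  induction M with
  | zero => simp
  | succ M ih =>
    rw [Finset.sum_range_succ, ih,
      Finset.sum_Ioc_consecutive f (Nat.le_add_right _ _)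
        (Nat.add_le_add_left (Nat.mul_le_mul_right c (Nat.le_succ M)) a)]

lemma sum_doubling (f : ℕ → ℝ) :
    ∀ K, ∑ k ∈ range K, ∑ i ∈ Ioc (2^k) (2^(k+1)), f i = ∑ i ∈ Ioc 1 (2^K), f i := by
  intro K
  induction K with
  | zero => simp
  | succ K ih =>
    rw [Finset.sum_range_succ, ih,
      Finset.sum_Ioc_consecutive f (Nat.one_le_two_pow)
        (Nat.pow_le_pow_right (by norm_num) (Nat.le_succ K))]

lemma geom_tail (i : ℕ) (hi : 1 ≤ i) (K : ℕ) :
    ∑ k ∈ range K, (if i ≤ 2^k then ((1:ℝ)/4)^k else 0) ≤ (4/3) * (1/(i:ℝ)^2) := by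
  set k₀ := Nat.clog 2 i with hk₀
  have hiff : ∀ k, i ≤ 2^k ↔ k₀ ≤ k := fun k => (Nat.clog_le_iff_le_pow (by norm_num : 1 < 2)).symm
  have hfil : ∑ k ∈ range K, (if i ≤ 2^k then ((1:ℝ)/4)^k else 0)
      = ∑ k ∈ Finset.Ico k₀ K, ((1:ℝ)/4)^k := by
    rw [← Finset.sum_filter]
    congr 1
    ext k
    simp only [Finset.mem_filter, Finset.mem_range, Finset.mem_Ico, hiff k]
    omega
  rw [hfil]
  have h1 : ∑ k ∈ Finset.Ico k₀ K, ((1:ℝ)/4)^k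
      = ((1:ℝ)/4)^k₀ * ∑ j ∈ range (K - k₀), ((1:ℝ)/4)^j := by
    rw [Finset.sum_Ico_eq_sum_range, Finset.mul_sum]
    exact Finset.sum_congr rfl fun j _ => by rw [pow_add]
  rw [h1]
  have h2 : ∑ j ∈ range (K - k₀), ((1:ℝ)/4)^j ≤ 4/3 := by
    have := Summable.sum_le_tsum (range (K - k₀)) (fun j _ => by positivity)
      (summable_geometric_of_lt_one (by norm_num) (by norm_num : (1:ℝ)/4 < 1))
    rw [tsum_geometric_of_lt_one (by norm_num) (by norm_num)] at this
    calc ∑ j ∈ range (K - k₀), ((1:ℝ)/4)^j ≤ (1 - 1/4)⁻¹ := this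
      _ = 4/3 := by norm_num
  have h3 : ((1:ℝ)/4)^k₀ ≤ 1/(i:ℝ)^2 := by
    have hle : i ≤ 2^k₀ := Nat.le_pow_clog (by norm_num) i
    have hleR : (i:ℝ) ≤ (2:ℝ)^k₀ := by exact_mod_cast hle
    have hi0 : (0:ℝ) < i := by exact_mod_cast hi
    have : (i:ℝ)^2 ≤ ((2:ℝ)^k₀)^2 := by nlinarith
    have h5 : (4:ℝ)^k₀ = ((2:ℝ)^k₀)^2 := by
      rw [← pow_mul, mul_comm, pow_mul]; norm_num
    have h4 : ((1:ℝ)/4)^k₀ = 1/((2:ℝ)^k₀)^2 := by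
      rw [div_pow, one_pow, h5]
    rw [h4]
    apply one_div_le_one_div_of_le (by positivity) this
  calc ((1:ℝ)/4)^k₀ * ∑ j ∈ range (K - k₀), ((1:ℝ)/4)^j
      ≤ (1/(i:ℝ)^2) * (4/3) := by
        apply mul_le_mul h3 h2 (Finset.sum_nonneg fun j _ => by positivity) (by positivity)
    _ = (4/3) * (1/(i:ℝ)^2) := by ring

lemma ae_tendsto_zero_of_summable_integral {Ω : Type*} [MeasurableSpace Ω] {P : Measure Ω}
    {f : ℕ → Ω → ℝ} (h0 : ∀ k ω, 0 ≤ f k ω) (hint : ∀ k, Integrable (f k) P)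
    (hsum : Summable fun k => ∫ ω, f k ω ∂P) :
    ∀ᵐ ω ∂P, Tendsto (fun k => f k ω) atTop (nhds 0) := by
  set F : ℕ → Ω → ENNReal := fun k ω => ENNReal.ofReal (f k ω) with hF
  have hFm : ∀ k, AEMeasurable (F k) P := fun k =>
    ENNReal.measurable_ofReal.comp_aemeasurable (hint k).aemeasurable
  have hlin : ∀ k, ∫⁻ ω, F k ω ∂P = ENNReal.ofReal (∫ ω, f k ω ∂P) := fun k =>
    (MeasureTheory.ofReal_integral_eq_lintegral_ofReal (hint k) (Filter.Eventually.of_forall (h0 k))).symm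
  have htsum : ∫⁻ ω, ∑' k, F k ω ∂P ≠ ⊤ := by
    rw [lintegral_tsum hFm]
    simp_rw [hlin]
    rw [← ENNReal.ofReal_tsum_of_nonneg (fun k => integral_nonneg (h0 k)) hsum]
    exact ENNReal.ofReal_ne_top
  have hae := ae_lt_top' (AEMeasurable.ennreal_tsum hFm) htsum
  filter_upwards [hae] with ω hω
  have h1 : Tendsto (fun k => F k ω) atTop (nhds 0) :=
    ENNReal.tendsto_atTop_zero_of_tsum_ne_top hω.ne
  have h2 : Tendsto (fun k => (F k ω).toReal) atTop (nhds 0) := by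
    have hc : Tendsto ENNReal.toReal (nhds 0) (nhds ((0:ENNReal).toReal)) :=
      ENNReal.tendsto_toReal (by simp)
    simp only [ENNReal.toReal_zero] at hc
    exact hc.comp h1
  convert h2 using 2 with k
  rw [hF]
  simp [ENNReal.toReal_ofReal (h0 k ω)]

set_option maxHeartbeats 1600000 in
/-- Law of Large Numbers for random variables with short-term dependence
(Serfling 1980, Theorem E). -/
theorem stmt_0 {Ω : Type*} [MeasurableSpace Ω] (P : Measure Ω) [IsProbabilityMeasure P]
    (X : ℕ → Ω → ℝ) (μ σ ρ : ℕ → ℝ)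
    (hL2 : ∀ i, MeasureTheory.MemLp (X i) 2 P)
    (hmean : ∀ i, 1 ≤ i → ∫ ω, X i ω ∂P = μ i)
    (hvar : ∀ i, 1 ≤ i → ∫ ω, (X i ω - μ i) ^ 2 ∂P = (σ i) ^ 2)
    (hσ : ∀ i, 0 ≤ σ i)
    (hρ : ∀ m, 0 ≤ ρ m ∧ ρ m ≤ 1)
    (hcov : ∀ i j, 1 ≤ i → i ≤ j →
      ∫ ω, (X i ω - μ i) * (X j ω - μ j) ∂P ≤ ρ (j - i) * (σ i * σ j))
    (hρsum : Summable fun m => ρ (m + 1))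
    (hσsum : Summable fun i : ℕ => (σ i) ^ 2 * (Real.log i) ^ 2 / (i : ℝ) ^ 2) :
    ∀ᵐ ω ∂P, Filter.Tendsto
      (fun n : ℕ => (∑ i ∈ Finset.Icc 1 n, X i ω) / n - (∑ i ∈ Finset.Icc 1 n, μ i) / n)
      Filter.atTop (nhds 0) := by
  classical
  set R := ∑' m, ρ (m+1) with hRdef
  have hR0 : 0 ≤ R := tsum_nonneg fun m => (hρ (m+1)).1
  set C := 1 + 2*R with hCdef
  have hC0 : 0 < C := by rw [hCdef]; linarith
  set Y : ℕ → Ω → ℝ := fun i ω => X i ω - μ i with hYdef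
  have hYL2 : ∀ i, MemLp (Y i) 2 P := fun i => (hL2 i).sub (memLp_const (μ i))
  have hblock : ∀ a b, ∫ ω, (∑ i ∈ Finset.Ioc a b, Y i ω)^2 ∂P
      ≤ C * ∑ i ∈ Finset.Ioc a b, (σ i)^2 := fun a b =>
    cov_block_bound P X μ σ ρ hL2 hvar hσ hρ hcov hρsum a b
  have hSL2 : ∀ a b : ℕ, MemLp (fun ω => ∑ i ∈ Finset.Ioc a b, Y i ω) 2 P := fun a b =>
    memLp_finsetSum _ (fun i _ => hYL2 i)
  have hSint : ∀ a b : ℕ, Integrable (fun ω => (∑ i ∈ Finset.Ioc a b, Y i ω)^2) P :=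
    fun a b => (hSL2 a b).integrable_sq
  set T : ℕ → Ω → ℝ := fun n ω => ∑ i ∈ Finset.Ioc 0 n, Y i ω with hTdef
  set U : ℕ → Ω → ℝ := fun k ω => ((k:ℝ)+1) * Gsum (fun i => Y i ω) (2^k) k with hUdef
  set V1 : ℕ → ℝ := fun k => ∑ i ∈ Finset.Ioc 0 (2^k), (σ i)^2 with hV1def
  set V2 : ℕ → ℝ := fun k => ∑ i ∈ Finset.Ioc (2^k) (2^(k+1)), (σ i)^2 with hV2def
  have hUint : ∀ k, Integrable (U k) P := by
    intro k
    apply Integrable.const_mul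
    have he : (fun ω => Gsum (fun i => Y i ω) (2^k) k)
        = fun ω => ∑ j ∈ range (k+1), ∑ l ∈ range (2^(k-j)),
            (∑ i ∈ Ioc (2^k + l*2^j) (2^k + (l+1)*2^j), Y i ω)^2 := rfl
    rw [he]
    exact integrable_finset_sum _ fun j _ => integrable_finset_sum _ fun l _ => hSint _ _
  have hUnonneg : ∀ k ω, 0 ≤ U k ω := fun k ω =>
    mul_nonneg (by positivity) (Gsum_nonneg _ _ _)
  have hUbound : ∀ k, ∫ ω, U k ω ∂P ≤ ((k:ℝ)+1)^2 * (C * V2 k) := by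
    intro k
    have hGint : ∫ ω, Gsum (fun i => Y i ω) (2^k) k ∂P
        = ∑ j ∈ range (k+1), ∑ l ∈ range (2^(k-j)),
            ∫ ω, (∑ i ∈ Ioc (2^k + l*2^j) (2^k + (l+1)*2^j), Y i ω)^2 ∂P := by
      unfold Gsum
      rw [integral_finset_sum _ (fun j _ => integrable_finset_sum _ fun l _ => hSint _ _)]
      exact Finset.sum_congr rfl fun j _ => integral_finset_sum _ fun l _ => hSint _ _
    have hG : ∫ ω, Gsum (fun i => Y i ω) (2^k) k ∂P ≤ ((k:ℝ)+1) * (C * V2 k) := by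
      rw [hGint]
      calc ∑ j ∈ range (k+1), ∑ l ∈ range (2^(k-j)),
            ∫ ω, (∑ i ∈ Ioc (2^k + l*2^j) (2^k + (l+1)*2^j), Y i ω)^2 ∂P
          ≤ ∑ j ∈ range (k+1), ∑ l ∈ range (2^(k-j)),
              C * ∑ i ∈ Ioc (2^k + l*2^j) (2^k + (l+1)*2^j), (σ i)^2 :=
            Finset.sum_le_sum fun j _ => Finset.sum_le_sum fun l _ => hblock _ _
        _ = ∑ j ∈ range (k+1), C * V2 k := by
            refine Finset.sum_congr rfl fun j hj => ?_
            have hjk : j ≤ k := Nat.lt_succ_iff.1 (Finset.mem_range.1 hj)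
            rw [← Finset.mul_sum, sum_blocks (fun i => (σ i)^2) (2^k) (2^j) (2^(k-j))]
            have h2 : (2:ℕ)^(k-j) * 2^j = 2^k := by rw [← pow_add]; congr 1; omega
            have h3 : (2:ℕ)^k + 2^(k-j) * 2^j = 2^(k+1) := by rw [h2, pow_succ]; ring
            rw [h3]
        _ = ((k:ℝ)+1) * (C * V2 k) := by
            rw [Finset.sum_const, Finset.card_range, nsmul_eq_mul]
            push_cast
            ring
    have hint := integral_const_mul (μ := P) ((k:ℝ)+1) (fun ω => Gsum (fun i => Y i ω) (2^k) k)
    calc ∫ ω, U k ω ∂P = ((k:ℝ)+1) * ∫ ω, Gsum (fun i => Y i ω) (2^k) k ∂P := by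
          rw [hUdef]; exact hint
      _ ≤ ((k:ℝ)+1) * (((k:ℝ)+1) * (C * V2 k)) :=
          mul_le_mul_of_nonneg_left hG (by positivity)
      _ = ((k:ℝ)+1)^2 * (C * V2 k) := by ring
  have hTint : ∀ k : ℕ, Integrable (fun ω => (T (2^k) ω)^2) P := fun k => hSint 0 (2^k)
  have hTbound : ∀ k : ℕ, ∫ ω, (T (2^k) ω)^2 ∂P ≤ C * V1 k := fun k => hblock 0 (2^k)
  set W : ℕ → Ω → ℝ := fun k ω => ((T (2^k) ω)^2 + U k ω) / 4^k with hWdef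
  have hWnonneg : ∀ k ω, 0 ≤ W k ω := fun k ω =>
    div_nonneg (add_nonneg (sq_nonneg _) (hUnonneg k ω)) (by positivity)
  have hWint : ∀ k, Integrable (W k) P := fun k => ((hTint k).add (hUint k)).div_const _
  have hWval : ∀ k, ∫ ω, W k ω ∂P ≤ (C * V1 k + ((k:ℝ)+1)^2 * (C * V2 k)) / 4^k := by
    intro k
    have : ∫ ω, W k ω ∂P = ((∫ ω, (T (2^k) ω)^2 ∂P) + ∫ ω, U k ω ∂P) / 4^k := by
      rw [hWdef]
      rw [integral_div, integral_add (hTint k) (hUint k)]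
    rw [this]
    apply div_le_div_of_nonneg_right ?_ (by positivity)
    · exact add_le_add (hTbound k) (hUbound k)
  -- Summability of the dominating sequence
  have hS1 : Summable (fun i : ℕ => (σ i)^2 / (i:ℝ)^2) := by
    rw [← summable_nat_add_iff 3]
    refine Summable.of_nonneg_of_le (fun i => by positivity) (fun i => ?_)
      ((summable_nat_add_iff 3).2 hσsum)
    have h3 : (3:ℝ) ≤ ((i+3 : ℕ):ℝ) := by push_cast; linarith [Nat.cast_nonneg (α := ℝ) i]
    have hlog : 1 ≤ Real.log ((i+3 : ℕ):ℝ) := by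
      rw [← Real.log_exp 1]
      apply Real.log_le_log (Real.exp_pos 1)
      calc Real.exp 1 ≤ 2.7182818286 := Real.exp_one_lt_d9.le
        _ ≤ 3 := by norm_num
        _ ≤ _ := h3
    have hsq : 1 ≤ (Real.log ((i+3 : ℕ):ℝ))^2 := by nlinarith
    have hden : (0:ℝ) < ((i+3:ℕ):ℝ)^2 := by positivity
    rw [div_le_div_iff₀ hden hden]
    have hσ2 : (0:ℝ) ≤ (σ (i+3))^2 := sq_nonneg _
    nlinarith [mul_nonneg hσ2 hden.le]
  set g1 : ℕ → ℝ := fun i => (σ i)^2 * (Real.log i)^2 / (i:ℝ)^2 with hg1def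
  have hg1nonneg : ∀ i, 0 ≤ g1 i := fun i => by rw [hg1def]; positivity
  set S1 := ∑' i, (σ i)^2 / (i:ℝ)^2 with hS1def
  set S2 := ∑' i, g1 i with hS2def
  have hL2pos : 0 < Real.log 2 := Real.log_pos one_lt_two
  -- key pointwise comparison for part 2
  have hkey2 : ∀ k : ℕ, ∀ i ∈ Finset.Ioc (2^k) (2^(k+1)),
      ((k:ℝ)+1)^2 * ((1:ℝ)/4)^k * (σ i)^2 ≤ (16/(Real.log 2)^2) * g1 i := by
    intro k i hi
    obtain ⟨hi1, hi2⟩ := Finset.mem_Ioc.1 hi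
    have h2k : (2:ℝ)^k < (i:ℝ) := by exact_mod_cast hi1
    have hik : (i:ℝ) ≤ (2:ℝ)^(k+1) := by exact_mod_cast hi2
    have hxpos : (0:ℝ) < (2:ℝ)^k := by positivity
    have hx1 : (1:ℝ) ≤ (2:ℝ)^k := by exact_mod_cast Nat.one_le_two_pow (n := k)
    have hi2' : (2:ℝ) ≤ (i:ℝ) := by
      have h2n : 2 ≤ i := by have := Nat.one_le_two_pow (n := k); omega
      exact_mod_cast h2n
    have hipos : (0:ℝ) < (i:ℝ) := by linarith
    have hlogi2 : Real.log 2 ≤ Real.log i := Real.log_le_log (by norm_num) hi2'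
    have hlogik : (k:ℝ) * Real.log 2 ≤ Real.log i := by
      calc (k:ℝ) * Real.log 2 = Real.log ((2:ℝ)^k) := (Real.log_pow 2 k).symm
        _ ≤ Real.log i := Real.log_le_log hxpos h2k.le
    have hA : ((k:ℝ)+1) * Real.log 2 ≤ 2 * Real.log i := by nlinarith
    have hB : (i:ℝ)^2 ≤ 4 * ((2:ℝ)^k)^2 := by
      have hs : (2:ℝ)^(k+1) = 2 * 2^k := by rw [pow_succ]; ring
      nlinarith
    have h14 : ((1:ℝ)/4)^k = 1/((2:ℝ)^k)^2 := by
      have h5 : (4:ℝ)^k = ((2:ℝ)^k)^2 := by rw [← pow_mul, mul_comm, pow_mul]; norm_num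
      rw [div_pow, one_pow, h5]
    have hk1 : (0:ℝ) ≤ (k:ℝ)+1 := by positivity
    have hsqA : ((k:ℝ)+1)^2 * (Real.log 2)^2 ≤ 4 * (Real.log i)^2 := by
      nlinarith [mul_nonneg hk1 hL2pos.le]
    have key' : ((k:ℝ)+1)^2 * ((1:ℝ)/4)^k ≤ (16/(Real.log 2)^2) * ((Real.log i)^2/(i:ℝ)^2) := by
      rw [h14]
      rw [mul_one_div, div_mul_div_comm, div_le_div_iff₀ (by positivity) (by positivity)]
      have hh1 : ((k:ℝ)+1)^2 * (Real.log 2)^2 * (i:ℝ)^2 ≤ 4 * (Real.log i)^2 * (i:ℝ)^2 :=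
        mul_le_mul_of_nonneg_right hsqA (sq_nonneg (i:ℝ))
      have hh2 : 4 * (Real.log i)^2 * (i:ℝ)^2 ≤ 4 * (Real.log i)^2 * (4 * ((2:ℝ)^k)^2) :=
        mul_le_mul_of_nonneg_left hB (by positivity)
      nlinarith [hh1, hh2]
    calc ((k:ℝ)+1)^2 * ((1:ℝ)/4)^k * (σ i)^2
        ≤ ((16/(Real.log 2)^2) * ((Real.log i)^2/(i:ℝ)^2)) * (σ i)^2 :=
          mul_le_mul_of_nonneg_right key' (sq_nonneg _)
      _ = (16/(Real.log 2)^2) * g1 i := by rw [hg1def]; ring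
  set gbound : ℕ → ℝ := fun k => (C * V1 k + ((k:ℝ)+1)^2 * (C * V2 k)) / 4^k with hgbdef
  have hV1nonneg : ∀ k, 0 ≤ V1 k := fun k => Finset.sum_nonneg fun i _ => sq_nonneg _
  have hV2nonneg : ∀ k, 0 ≤ V2 k := fun k => Finset.sum_nonneg fun i _ => sq_nonneg _
  have hgbnonneg : ∀ k, 0 ≤ gbound k := by
    intro k
    rw [hgbdef]
    have := hV1nonneg k
    have := hV2nonneg k
    positivity
  have hgbsum : Summable gbound := by
    apply summable_of_sum_range_le hgbnonneg
      (c := C * ((4/3) * S1) + C * ((16/(Real.log 2)^2) * S2))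
    intro K
    have hsplit : ∀ k : ℕ, gbound k
        = C * (((1:ℝ)/4)^k * V1 k) + C * (((k:ℝ)+1)^2 * ((1:ℝ)/4)^k * V2 k) := by
      intro k
      rw [hgbdef]
      have h4 : ((1:ℝ)/4)^k = 1/(4:ℝ)^k := by rw [div_pow, one_pow]
      rw [h4]
      field_simp
    simp_rw [hsplit, Finset.sum_add_distrib, ← Finset.mul_sum]
    have hpart1 : ∑ k ∈ range K, ((1:ℝ)/4)^k * V1 k ≤ (4/3) * S1 := by
      have hstep : ∀ k ∈ range K, ((1:ℝ)/4)^k * V1 k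
          = ∑ i ∈ Finset.Ioc 0 (2^K), (if i ≤ 2^k then ((1:ℝ)/4)^k * (σ i)^2 else 0) := by
        intro k hk
        have hkK : k < K := Finset.mem_range.1 hk
        have hmono : (2:ℕ)^k ≤ 2^K := Nat.pow_le_pow_right (by norm_num) hkK.le
        rw [← Finset.sum_filter]
        have hfeq : (Finset.Ioc 0 (2^K)).filter (fun i => i ≤ 2^k) = Finset.Ioc 0 (2^k) := by
          ext i
          simp only [Finset.mem_filter, Finset.mem_Ioc]
          omega
        rw [hfeq, hV1def, Finset.mul_sum]
      rw [Finset.sum_congr rfl hstep, Finset.sum_comm]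
      have hper : ∀ i ∈ Finset.Ioc 0 (2^K),
          ∑ k ∈ range K, (if i ≤ 2^k then ((1:ℝ)/4)^k * (σ i)^2 else 0)
          ≤ (4/3) * ((σ i)^2 / (i:ℝ)^2) := by
        intro i hi
        have hi1 : 1 ≤ i := (Finset.mem_Ioc.1 hi).1
        have he : ∑ k ∈ range K, (if i ≤ 2^k then ((1:ℝ)/4)^k * (σ i)^2 else 0)
            = (∑ k ∈ range K, (if i ≤ 2^k then ((1:ℝ)/4)^k else 0)) * (σ i)^2 := by
          rw [Finset.sum_mul]
          refine Finset.sum_congr rfl fun k _ => ?_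
          split <;> simp
        rw [he]
        calc (∑ k ∈ range K, (if i ≤ 2^k then ((1:ℝ)/4)^k else 0)) * (σ i)^2
            ≤ ((4/3) * (1/(i:ℝ)^2)) * (σ i)^2 :=
              mul_le_mul_of_nonneg_right (geom_tail i hi1 K) (sq_nonneg _)
          _ = (4/3) * ((σ i)^2 / (i:ℝ)^2) := by ring
      calc ∑ i ∈ Finset.Ioc 0 (2^K),
            ∑ k ∈ range K, (if i ≤ 2^k then ((1:ℝ)/4)^k * (σ i)^2 else 0)
          ≤ ∑ i ∈ Finset.Ioc 0 (2^K), (4/3) * ((σ i)^2 / (i:ℝ)^2) :=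
            Finset.sum_le_sum hper
        _ = (4/3) * ∑ i ∈ Finset.Ioc 0 (2^K), (σ i)^2 / (i:ℝ)^2 := by rw [Finset.mul_sum]
        _ ≤ (4/3) * S1 := by
            refine mul_le_mul_of_nonneg_left ?_ (by norm_num)
            exact Summable.sum_le_tsum _ (fun i _ => by positivity) hS1
    have hpart2 : ∑ k ∈ range K, ((k:ℝ)+1)^2 * ((1:ℝ)/4)^k * V2 k
        ≤ (16/(Real.log 2)^2) * S2 := by
      have hstep : ∀ k ∈ range K, ((k:ℝ)+1)^2 * ((1:ℝ)/4)^k * V2 k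
          ≤ ∑ i ∈ Finset.Ioc (2^k) (2^(k+1)), (16/(Real.log 2)^2) * g1 i := by
        intro k _
        rw [hV2def, Finset.mul_sum]
        exact Finset.sum_le_sum (hkey2 k)
      calc ∑ k ∈ range K, ((k:ℝ)+1)^2 * ((1:ℝ)/4)^k * V2 k
          ≤ ∑ k ∈ range K, ∑ i ∈ Finset.Ioc (2^k) (2^(k+1)), (16/(Real.log 2)^2) * g1 i :=
            Finset.sum_le_sum hstep
        _ = ∑ i ∈ Finset.Ioc 1 (2^K), (16/(Real.log 2)^2) * g1 i :=
            sum_doubling (fun i => (16/(Real.log 2)^2) * g1 i) K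
        _ = (16/(Real.log 2)^2) * ∑ i ∈ Finset.Ioc 1 (2^K), g1 i := by rw [Finset.mul_sum]
        _ ≤ (16/(Real.log 2)^2) * S2 := by
            refine mul_le_mul_of_nonneg_left ?_ (by positivity)
            exact Summable.sum_le_tsum _ (fun i _ => hg1nonneg i) hσsum
    have hCpos := hC0.le
    gcongr
  have hWsum : Summable (fun k => ∫ ω, W k ω ∂P) :=
    Summable.of_nonneg_of_le (fun k => integral_nonneg (fun ω => hWnonneg k ω))
      (fun k => (hWval k).trans (le_of_eq rfl)) hgbsum
  have hae := ae_tendsto_zero_of_summable_integral hWnonneg hWint hWsum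
  filter_upwards [hae] with ω hω
  -- pointwise argument
  have hT2 : Tendsto (fun k => (T (2^k) ω)^2/(4:ℝ)^k) atTop (nhds 0) := by
    refine squeeze_zero (fun k => by positivity) (fun k => ?_) hω
    rw [hWdef]
    apply div_le_div_of_nonneg_right ?_ (by positivity)
    · linarith [hUnonneg k ω]
  have hU2 : Tendsto (fun k => U k ω/(4:ℝ)^k) atTop (nhds 0) := by
    refine squeeze_zero (fun k => div_nonneg (hUnonneg k ω) (by positivity)) (fun k => ?_) hω
    rw [hWdef]
    apply div_le_div_of_nonneg_right ?_ (by positivity)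
    · linarith [sq_nonneg (T (2^k) ω)]
  have hsqrt : Tendsto Real.sqrt (nhds 0) (nhds 0) := by
    have := Real.continuous_sqrt.tendsto 0
    simpa using this
  have h45 : ∀ k : ℕ, (4:ℝ)^k = ((2:ℝ)^k)^2 := by
    intro k; rw [← pow_mul, mul_comm, pow_mul]; norm_num
  have hTa : Tendsto (fun k => |T (2^k) ω|/(2:ℝ)^k) atTop (nhds 0) := by
    have hcomp := hsqrt.comp hT2
    have he : ∀ k : ℕ, Real.sqrt ((T (2^k) ω)^2/(4:ℝ)^k) = |T (2^k) ω|/(2:ℝ)^k := by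
      intro k
      rw [Real.sqrt_div (sq_nonneg _), Real.sqrt_sq_eq_abs, h45 k,
        Real.sqrt_sq (by positivity : (0:ℝ) ≤ (2:ℝ)^k)]
    have : (fun k => Real.sqrt ((T (2^k) ω)^2/(4:ℝ)^k)) = fun k => |T (2^k) ω|/(2:ℝ)^k :=
      funext he
    rwa [← this]
  have hUa : Tendsto (fun k => Real.sqrt (U k ω)/(2:ℝ)^k) atTop (nhds 0) := by
    have hcomp := hsqrt.comp hU2
    have he : ∀ k : ℕ, Real.sqrt (U k ω/(4:ℝ)^k) = Real.sqrt (U k ω)/(2:ℝ)^k := by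
      intro k
      rw [Real.sqrt_div (hUnonneg k ω), h45 k,
        Real.sqrt_sq (by positivity : (0:ℝ) ≤ (2:ℝ)^k)]
    have : (fun k => Real.sqrt (U k ω/(4:ℝ)^k)) = fun k => Real.sqrt (U k ω)/(2:ℝ)^k :=
      funext he
    rwa [← this]
  set b : ℕ → ℝ := fun k => (|T (2^k) ω| + Real.sqrt (U k ω))/(2:ℝ)^k with hbdef
  have hb : Tendsto b atTop (nhds 0) := by
    have h := hTa.add hUa
    simp only [add_zero] at h
    exact h.congr fun k => (add_div _ _ _).symm
  set κ : ℕ → ℕ := fun n => Nat.log 2 (n-1) with hκdef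
  have hκ : Tendsto κ atTop atTop := by
    refine tendsto_atTop_atTop.2 fun K => ⟨2^K + 1, fun n hn => ?_⟩
    rw [hκdef]
    have h1 : 2^K ≤ n - 1 := by omega
    have h2 : n - 1 ≠ 0 := by
      have := Nat.one_le_two_pow (n := K)
      omega
    exact (Nat.le_log_iff_pow_le one_lt_two h2).2 h1
  have hbound : ∀ n : ℕ, 2 ≤ n → |T n ω| / (n:ℝ) ≤ b (κ n) := by
    intro n hn
    set k := κ n with hkdef
    have hn1 : 1 ≤ n - 1 := by omega
    have hk1 : 2^k ≤ n - 1 := Nat.pow_log_le_self 2 (by omega)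
    have hk2 : n - 1 < 2^(k+1) := Nat.lt_pow_succ_log_self one_lt_two (n-1)
    have hps : (2:ℕ)^(k+1) = 2^k + 2^k := by rw [pow_succ]; ring
    have hkn : 2^k < n := by omega
    have hnk : n ≤ 2^(k+1) := by omega
    set m := n - 2^k with hmdef
    have hm : m ≤ 2^k := by omega
    have hnm : 2^k + m = n := by omega
    have hdy := dyadic_sq_bound (fun i => Y i ω) k (2^k) m hm
    rw [hnm] at hdy
    have habs : |∑ i ∈ Ioc (2^k) n, Y i ω| ≤ Real.sqrt (U k ω) := by
      rw [← Real.sqrt_sq_eq_abs]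
      apply Real.sqrt_le_sqrt
      rw [hUdef]
      exact hdy
    have hsplit : T n ω = T (2^k) ω + ∑ i ∈ Ioc (2^k) n, Y i ω := by
      rw [hTdef]
      exact (Finset.sum_Ioc_consecutive _ (Nat.zero_le _) hkn.le).symm
    have htri : |T n ω| ≤ |T (2^k) ω| + Real.sqrt (U k ω) := by
      rw [hsplit]
      calc |T (2^k) ω + ∑ i ∈ Ioc (2^k) n, Y i ω|
          ≤ |T (2^k) ω| + |∑ i ∈ Ioc (2^k) n, Y i ω| := abs_add_le _ _
        _ ≤ |T (2^k) ω| + Real.sqrt (U k ω) := by linarith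
    have hnum0 : (0:ℝ) ≤ |T (2^k) ω| + Real.sqrt (U k ω) :=
      add_nonneg (abs_nonneg _) (Real.sqrt_nonneg _)
    have hkR : (2:ℝ)^k ≤ (n:ℝ) := by
      have : ((2^k : ℕ):ℝ) ≤ (n:ℝ) := by exact_mod_cast hkn.le
      push_cast at this
      exact this
    have hnpos : (0:ℝ) < (n:ℝ) := by
      have : (0:ℕ) < n := by omega
      exact_mod_cast this
    calc |T n ω| / (n:ℝ) ≤ (|T (2^k) ω| + Real.sqrt (U k ω)) / (n:ℝ) := by
          apply div_le_div_of_nonneg_right htri hnpos.le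
      _ ≤ (|T (2^k) ω| + Real.sqrt (U k ω)) / (2:ℝ)^k := by
          apply div_le_div_of_nonneg_left hnum0 (by positivity) hkR
      _ = b k := by rw [hbdef]
  have hgoal : Tendsto (fun n : ℕ => T n ω / (n:ℝ)) atTop (nhds 0) := by
    apply squeeze_zero_norm' ?_ (hb.comp hκ)
    filter_upwards [eventually_ge_atTop 2] with n hn
    have hnpos : (0:ℝ) ≤ (n:ℝ) := Nat.cast_nonneg n
    rw [Real.norm_eq_abs, abs_div, abs_of_nonneg hnpos]
    exact hbound n hn
  have heq : ∀ n : ℕ, (∑ i ∈ Finset.Icc 1 n, X i ω)/(n:ℝ) - (∑ i ∈ Finset.Icc 1 n, μ i)/(n:ℝ)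
      = T n ω / (n:ℝ) := by
    intro n
    rw [div_sub_div_same]
    congr 1
    rw [hTdef, ← Finset.sum_sub_distrib]
    refine Finset.sum_congr ?_ fun i _ => rfl
    ext i
    simp only [Finset.mem_Icc, Finset.mem_Ioc]
    omega
  simpa only [heq] using hgoal
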